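/- Every automorphism of a tree (a connected acyclic graph) either fixes some vertex, or fixes the midpoint of some edge, or has an invariant line (a bi-infinite geodesic) along which it acts by a nontrivial translation; moreover, if the automorphism inverts no edge and fixes no vertex, then the invariant line is unique. -/

import Mathlib

/-- A line in a graph: a bi-infinite geodesic, given by an injective map `ℤ → V`
with consecutive vertices adjacent. -/
def IsGraphLine {V : Type*} (G : SimpleGraph V) (c : ℤ → V) : Prop :=
  Function.Injective c ∧ ∀ n : ℤ, G.Adj (c n) (c (n + 1))

/-- A line invariant under an automorphism `f`, along which `f` acts by a
nontrivial translation. -/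
def IsInvariantLine {V : Type*} (G : SimpleGraph V) (f : G ≃g G) (c : ℤ → V) : Prop :=
  IsGraphLine G c ∧ ∃ d : ℤ, d ≠ 0 ∧ ∀ n : ℤ, f (c n) = c (n + d)

section TreeAux

open SimpleGraph Walk


variable {V : Type*} {G : SimpleGraph V}

lemma getVert_injOn {u v : V} {p : G.Walk u v} (hp : p.IsPath) :
    ∀ i j, i ≤ p.length → j ≤ p.length → p.getVert i = p.getVert j → i = j := by
  induction p with
  | nil => intro i j hi hj _; simp only [Walk.length_nil, Nat.le_zero] at hi hj; omega
  | @cons a b c h q ih =>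
    rw [Walk.cons_isPath_iff] at hp
    intro i j hi hj heq
    simp only [Walk.length_cons] at hi hj
    match i, j with
    | 0, 0 => rfl
    | 0, j + 1 =>
      exfalso
      rw [Walk.getVert_zero, Walk.getVert_cons_succ] at heq
      exact hp.2 (Walk.mem_support_iff_exists_getVert.mpr ⟨j, heq.symm, by omega⟩)
    | i + 1, 0 =>
      exfalso
      rw [Walk.getVert_zero, Walk.getVert_cons_succ] at heq
      exact hp.2 (Walk.mem_support_iff_exists_getVert.mpr ⟨i, heq, by omega⟩)
    | i + 1, j + 1 =>
      rw [Walk.getVert_cons_succ, Walk.getVert_cons_succ] at heq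
      have := ih hp.1 i j (by omega) (by omega) heq
      omega

lemma exists_walk_getVert (p : G.Walk u v) (j : ℕ) :
    ∃ w : G.Walk u (p.getVert j), w.length ≤ j := by
  induction p generalizing j with
  | nil => exact ⟨(Walk.nil' _).copy rfl (by rw [Walk.getVert_of_length_le _ (by simp)]), by simp⟩
  | @cons a b c h q ih =>
    match j with
    | 0 => exact ⟨(Walk.nil' _).copy rfl (by rw [Walk.getVert_zero]), by simp⟩
    | j + 1 =>
      obtain ⟨w, hw⟩ := ih j
      exact ⟨(Walk.cons h w).copy rfl (by rw [Walk.getVert_cons_succ]), by simpa using by omega⟩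

lemma dist_getVert_le (p : G.Walk u v) (j : ℕ) : G.dist u (p.getVert j) ≤ j := by
  obtain ⟨w, hw⟩ := exists_walk_getVert p j
  exact le_trans (SimpleGraph.dist_le w) hw

lemma path_length_eq_dist (hT : G.IsTree) {a b : V} (p : G.Walk a b) (hp : p.IsPath) :
    p.length = G.dist a b := by
  classical
  obtain ⟨w, hw⟩ := hT.isConnected.exists_walk_length_eq_dist a b
  have h1 : p = w.bypass := (hT.existsUnique_path a b).unique hp w.bypass_isPath
  exact le_antisymm (h1 ▸ le_trans w.length_bypass_le hw.le) (SimpleGraph.dist_le p)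

lemma exists_geodesic (hT : G.IsTree) (a b : V) :
    ∃ p : G.Walk a b, p.IsPath ∧ p.length = G.dist a b := by
  classical
  obtain ⟨w, _⟩ := hT.isConnected.exists_walk_length_eq_dist a b
  exact ⟨w.bypass, w.bypass_isPath, path_length_eq_dist hT _ w.bypass_isPath⟩

lemma adj_dist_cases (hT : G.IsTree) (a : V) {x y : V} (hxy : G.Adj x y) :
    G.dist a y = G.dist a x + 1 ∨ G.dist a x = G.dist a y + 1 := by
  classical
  obtain ⟨p, hp, hl⟩ := exists_geodesic hT a x
  by_cases hy : y ∈ p.support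
  · right
    obtain ⟨j, hj1, hj2⟩ := Walk.mem_support_iff_exists_getVert.mp hy
    have hdy : G.dist a y ≤ j := hj1 ▸ dist_getVert_le p j
    have hjne : j ≠ p.length := by
      intro h; rw [h, Walk.getVert_length] at hj1; exact hxy.ne hj1
    -- dist a x ≤ dist a y + 1
    obtain ⟨q, hq, hlq⟩ := exists_geodesic hT a y
    have h1 : G.dist a x ≤ G.dist a y + 1 := by
      have := SimpleGraph.dist_le (q.concat hxy.symm)
      rwa [Walk.length_concat, hlq] at this
    have h2 : G.dist a y ≤ G.dist a x - 1 := by omega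
    -- also dist a x ≤ j + (length - j)?? need lower bound on dist a y
    -- dist a x ≤ dist a y + 1 and dist a y ≤ j ≤ length - 1 = dist a x - 1
    omega
  · left
    have hpath : (p.concat hxy).IsPath := by
      rw [Walk.concat_eq_append]
      rw [Walk.isPath_def, Walk.support_append]
      simp only [Walk.support_cons, Walk.support_nil, List.tail_cons]
      rw [List.nodup_append]
      refine ⟨hp.support_nodup, List.nodup_singleton _, ?_⟩
      intro z hz b hb hzb
      simp only [List.mem_singleton] at hb
      subst hb
      exact hy (hzb ▸ hz)
    have := path_length_eq_dist hT _ hpath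
    rw [Walk.length_concat, hl] at this
    omega

lemma pred_unique (hT : G.IsTree) {a x z1 z2 : V} {t : ℕ}
    (h1 : G.Adj z1 x) (h2 : G.Adj z2 x) (hd1 : G.dist a z1 = t) (hd2 : G.dist a z2 = t)
    (hdx : G.dist a x = t + 1) : z1 = z2 := by
  classical
  obtain ⟨p1, hp1, hl1⟩ := exists_geodesic hT a z1
  obtain ⟨p2, hp2, hl2⟩ := exists_geodesic hT a z2
  have hx1 : x ∉ p1.support := by
    intro hx
    obtain ⟨j, hj1, hj2⟩ := Walk.mem_support_iff_exists_getVert.mp hx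
    have := hj1 ▸ dist_getVert_le p1 j
    omega
  have hx2 : x ∉ p2.support := by
    intro hx
    obtain ⟨j, hj1, hj2⟩ := Walk.mem_support_iff_exists_getVert.mp hx
    have := hj1 ▸ dist_getVert_le p2 j
    omega
  have key : ∀ {z : V} (p : G.Walk a z) (h : G.Adj z x), p.IsPath → x ∉ p.support →
      (p.concat h).IsPath := by
    intro z p h hp hx
    rw [Walk.concat_eq_append, Walk.isPath_def, Walk.support_append]
    simp only [Walk.support_cons, Walk.support_nil, List.tail_cons]
    rw [List.nodup_append]
    refine ⟨hp.support_nodup, List.nodup_singleton _, ?_⟩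
    intro w hw b hb hwb
    simp only [List.mem_singleton] at hb
    subst hb
    exact hx (hwb ▸ hw)
  have q1 := key p1 h1 hp1 hx1
  have q2 := key p2 h2 hp2 hx2
  have heq : p1.concat h1 = p2.concat h2 := (hT.existsUnique_path a x).unique q1 q2
  have hv1 : (p1.concat h1).getVert t = z1 := by
    rw [Walk.concat_eq_append, Walk.getVert_append]
    simp only [hl1, hd1 ▸ hl1, lt_self_iff_false, if_false]
    simp [hl1, hd1]
  have hv2 : (p2.concat h2).getVert t = z2 := by
    rw [Walk.concat_eq_append, Walk.getVert_append]
    simp [hl2, hd2]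
  rw [← hv1, ← hv2, heq]

lemma master (hT : G.IsTree) (g : ℕ → V) (N : ℕ)
    (hadj : ∀ j, j < N → G.Adj (g j) (g (j + 1)))
    (hnb : ∀ j, 1 ≤ j → j < N → g (j + 1) ≠ g (j - 1)) :
    ∀ t, t ≤ N → G.dist (g 0) (g t) = t := by
  intro t
  induction t using Nat.strong_induction_on with
  | _ t ih =>
    match t with
    | 0 => intro _; simp
    | s + 1 =>
      intro hsN
      have hs : G.dist (g 0) (g s) = s := ih s (by omega) (by omega)
      have hadj' := hadj s (by omega)
      rcases adj_dist_cases hT (g 0) hadj' with h | h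
      · rw [h, hs]
      · exfalso
        match s, hs, h with
        | 0, hs, h => omega
        | s + 1, hs, h =>
          have hs' : G.dist (g 0) (g s) = s := ih s (by omega) (by omega)
          have : g (s + 1 + 1) = g (s + 1 - 1) := by
            refine pred_unique hT (hadj (s+1) (by omega)).symm ?_ (by omega) ?_ hs
            · simpa using (hadj s (by omega))
            · simpa using hs'
          exact hnb (s+1) (by omega) (by omega) this

lemma seq_dist (hT : G.IsTree) (c : ℤ → V)
    (hadj : ∀ t : ℤ, G.Adj (c t) (c (t + 1)))
    (hnb : ∀ t : ℤ, c (t + 1) ≠ c (t - 1)) :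
    ∀ i j : ℤ, i ≤ j → G.dist (c i) (c j) = (j - i).toNat := by
  intro i j hij
  have := master hT (fun s => c (i + s)) (j - i).toNat
    (fun s _ => by simpa [add_assoc] using hadj (i + s))
    (fun s h1 _ => by
      have : ((s : ℤ) - 1) = ((s - 1 : ℕ) : ℤ) := by omega
      simpa [add_assoc, ← this, add_sub_assoc] using hnb (i + s)) (j - i).toNat le_rfl
  have h2 : i + (((j - i).toNat : ℕ) : ℤ) = j := by omega
  simpa only [Nat.cast_zero, add_zero, h2] using this

lemma seq_dist' (hT : G.IsTree) (c : ℤ → V)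
    (hadj : ∀ t : ℤ, G.Adj (c t) (c (t + 1)))
    (hnb : ∀ t : ℤ, c (t + 1) ≠ c (t - 1)) :
    ∀ i j : ℤ, G.dist (c i) (c j) = (j - i).natAbs := by
  intro i j
  rcases le_total i j with h | h
  · rw [seq_dist hT c hadj hnb i j h]; omega
  · rw [SimpleGraph.dist_comm, seq_dist hT c hadj hnb j i h]; omega

lemma seq_inj (hT : G.IsTree) (c : ℤ → V)
    (hadj : ∀ t : ℤ, G.Adj (c t) (c (t + 1)))
    (hnb : ∀ t : ℤ, c (t + 1) ≠ c (t - 1)) :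
    Function.Injective c := by
  intro i j hij
  have := seq_dist' hT c hadj hnb i j
  rw [hij, SimpleGraph.dist_self] at this
  omega

lemma axis_char (hT : G.IsTree) (f : G ≃g G) (c : ℤ → V)
    (hline : IsGraphLine G c) (d : ℤ) (hd0 : d ≠ 0) (htr : ∀ n : ℤ, f (c n) = c (n + d)) :
    Set.range c = {v | G.dist v (f v) = sInf (Set.range fun w => G.dist w (f w))} := by
  obtain ⟨hinj, hadj⟩ := hline
  have hnb : ∀ t : ℤ, c (t + 1) ≠ c (t - 1) := fun t h => by have := hinj h; omega
  have hdist := seq_dist' hT c hadj hnb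
  set D : ℕ := d.natAbs with hD
  have hD0 : D ≠ 0 := by omega
  have hone : ∀ m : ℤ, G.dist (c m) (f (c m)) = D := by
    intro m; rw [htr m, hdist]; simp [hD]
  have hfinj : Function.Injective (⇑f) := EquivLike.injective f
  have hne : Nonempty V := hT.isConnected.nonempty
  -- the key displacement formula
  have key : ∀ v : V, G.dist v (f v)
      = 2 * sInf (Set.range fun m : ℤ => G.dist v (c m)) + D := by
    intro v
    set k : ℕ := sInf (Set.range fun m : ℤ => G.dist v (c m)) with hk
    obtain ⟨m0, hm0⟩ : ∃ m0 : ℤ, G.dist v (c m0) = k :=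
      Nat.sInf_mem (Set.range_nonempty _)
    have hkle : ∀ m : ℤ, k ≤ G.dist v (c m) := fun m => Nat.sInf_le ⟨m, rfl⟩
    rcases Nat.eq_zero_or_pos k with hk0 | hkpos
    · have hv : v = c m0 := (hT.isConnected.dist_eq_zero_iff).mp (by rw [hm0, hk0])
      rw [hk0, hv, hone]
      ring
    · obtain ⟨q, hq, hlq⟩ := exists_geodesic hT v (c m0)
      rw [hm0] at hlq
      set e : ℤ := if 0 < d then 1 else -1 with he
      have hed : e * D = d := by
        rcases lt_or_gt_of_ne hd0 with h | h
        · rw [he, if_neg (by omega : ¬ (0:ℤ) < d)]; omega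
        · rw [he, if_pos h]; omega
      have hnotin : ∀ x : V, G.dist v x < k → x ∉ Set.range c := by
        rintro x hx ⟨m, rfl⟩; exact absurd (hkle m) (by omega)
      -- the concatenated sequence
      set g : ℕ → V := fun j =>
        if j ≤ k then q.getVert j
        else if j ≤ k + D then c (m0 + e * (j - k : ℕ))
        else f (q.getVert (2 * k + D - j)) with hg
      have hg_q : ∀ j, j ≤ k → g j = q.getVert j := fun j hj => by
        simp only [hg, if_pos hj]
      have hqk : q.getVert k = c m0 := by rw [← hlq, Walk.getVert_length]
      have hg_c : ∀ s, s ≤ D → g (k + s) = c (m0 + e * s) := by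
        intro s hs
        rcases Nat.eq_zero_or_pos s with rfl | hs1
        · simp only [add_zero, hg_q k le_rfl, hqk, Nat.cast_zero, mul_zero]
        · simp only [hg]
          rw [if_neg (by omega : ¬ k + s ≤ k), if_pos (by omega : k + s ≤ k + D)]
          have h3 : ((k + s - k : ℕ) : ℤ) = (s : ℤ) := by omega
          rw [h3]
      have hg_f : ∀ s, s ≤ k → g (k + D + s) = f (q.getVert (k - s)) := by
        intro s hs
        rcases Nat.eq_zero_or_pos s with rfl | hs1
        · rw [add_zero, hg_c D le_rfl, Nat.sub_zero, hqk, htr m0]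
          congr 1
          rw [hed]
        · simp only [hg]
          rw [if_neg (by omega : ¬ k + D + s ≤ k), if_neg (by omega : ¬ k + D + s ≤ k + D)]
          have h3 : 2 * k + D - (k + D + s) = k - s := by omega
          rw [h3]
      have hC : ∀ s t : ℤ, s + 1 = t ∨ t + 1 = s → G.Adj (c s) (c t) := by
        rintro s t (rfl | rfl)
        · exact hadj s
        · exact (hadj t).symm
      have hGadj : ∀ j, j < 2 * k + D → G.Adj (g j) (g (j + 1)) := by
        intro j hj
        rcases lt_or_ge j k with h1 | h1
        · rw [hg_q j (by omega), hg_q (j+1) (by omega)]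
          exact Walk.adj_getVert_succ q (by omega)
        · rcases lt_or_ge j (k + D) with h2 | h2
          · obtain ⟨s, rfl⟩ : ∃ s, j = k + s := ⟨j - k, by omega⟩
            rw [hg_c s (by omega), show k + s + 1 = k + (s+1) by ring, hg_c (s+1) (by omega)]
            apply hC
            rcases lt_or_gt_of_ne hd0 with h | h
            · right; rw [he, if_neg (by omega : ¬ (0:ℤ) < d)]; push_cast; ring
            · left; rw [he, if_pos h]; push_cast; ring
          · obtain ⟨s, rfl⟩ : ∃ s, j = k + D + s := ⟨j - k - D, by omega⟩
            rw [hg_f s (by omega), show k + D + s + 1 = k + D + (s+1) by ring,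
              hg_f (s+1) (by omega)]
            have := Walk.adj_getVert_succ q (i := k - s - 1) (by omega)
            rw [show k - s - 1 + 1 = k - s by omega] at this
            rw [show k - (s+1) = k - s - 1 by omega]
            exact (f.map_adj_iff.mpr this).symm
      have hGnb : ∀ j, 1 ≤ j → j < 2 * k + D → g (j + 1) ≠ g (j - 1) := by
        intro j hj1 hj2
        rcases lt_or_ge j k with h1 | h1
        · rw [hg_q (j+1) (by omega), hg_q (j-1) (by omega)]
          intro h
          have := getVert_injOn hq (j+1) (j-1) (by omega) (by omega) h
          omega
        · rcases eq_or_lt_of_le h1 with heq | h1'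
          · subst heq
            have e1 : g (k + 1) = c (m0 + e * 1) := by
              have := hg_c 1 (by omega); rwa [Nat.cast_one] at this
            rw [e1, hg_q (k-1) (by omega)]
            intro h
            exact hnotin (q.getVert (k-1)) (by
                have := dist_getVert_le q (k-1)
                omega) ⟨m0 + e * 1, h⟩
          · rcases lt_or_ge j (k + D) with h2 | h2
            · obtain ⟨s, rfl⟩ : ∃ s, j = k + s := ⟨j - k, by omega⟩
              have e1 : g (k + s + 1) = c (m0 + e * (s+1)) := by
                rw [show k + s + 1 = k + (s + 1) by ring, hg_c (s+1) (by omega)]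
                push_cast; ring_nf
              have e2 : g (k + s - 1) = c (m0 + e * ((s : ℤ) - 1)) := by
                rw [show k + s - 1 = k + (s - 1) by omega, hg_c (s-1) (by omega)]
                have h3 : ((s - 1 : ℕ) : ℤ) = (s : ℤ) - 1 := by omega
                rw [h3]
              rw [e1, e2]
              intro h
              have := hinj h
              have : e * ((s : ℤ)+1) = e * ((s : ℤ)-1) := by omega
              rcases lt_or_gt_of_ne hd0 with hh | hh
              · rw [he, if_neg (by omega : ¬ (0:ℤ) < d)] at this; omega
              · rw [he, if_pos hh] at this; omega
            · rcases eq_or_lt_of_le h2 with heq | h2'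
              · subst heq
                have e1 : g (k + D + 1) = f (q.getVert (k - 1)) := hg_f 1 (by omega)
                have e2 : g (k + D - 1) = c (m0 + e * ((D : ℤ) - 1)) := by
                  rw [show k + D - 1 = k + (D - 1) by omega, hg_c (D-1) (by omega)]
                  have h3 : ((D - 1 : ℕ) : ℤ) = (D : ℤ) - 1 := by omega
                  rw [h3]
                rw [e1, e2]
                intro h
                have hcf : c (m0 + e * ((D : ℤ) - 1)) = f (c (m0 + e * ((D : ℤ) - 1) - d)) := by
                  rw [htr]; congr 1; ring
                rw [hcf] at h
                have := hfinj h
                exact hnotin (q.getVert (k-1)) (by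
                    have := dist_getVert_le q (k-1)
                    omega) ⟨m0 + e * ((D : ℤ) - 1) - d, this.symm⟩
              · obtain ⟨s, rfl⟩ : ∃ s, j = k + D + s := ⟨j - k - D, by omega⟩
                have hs1 : 1 ≤ s := by omega
                have hsk : s < k := by omega
                have e1 : g (k + D + s + 1) = f (q.getVert (k - (s+1))) := by
                  rw [show k + D + s + 1 = k + D + (s + 1) by ring, hg_f (s+1) (by omega)]
                have e2 : g (k + D + s - 1) = f (q.getVert (k - (s-1))) := by
                  rw [show k + D + s - 1 = k + D + (s - 1) by omega, hg_f (s-1) (by omega)]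
                rw [e1, e2]
                intro h
                have := getVert_injOn hq _ _ (by omega) (by omega) (hfinj h)
                omega
      have hfin := master hT g (2 * k + D) hGadj hGnb (2 * k + D) le_rfl
      have hg0 : g 0 = v := by rw [hg_q 0 (by omega), Walk.getVert_zero]
      have hgN : g (2 * k + D) = f v := by
        rw [show 2 * k + D = k + D + k by ring, hg_f k le_rfl, Nat.sub_self,
          Walk.getVert_zero]
      rw [hg0, hgN] at hfin
      exact hfin
  -- conclude
  have hSinf : sInf (Set.range fun w => G.dist w (f w)) = D := by
    apply le_antisymm
    · exact Nat.sInf_le ⟨c 0, hone 0⟩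
    · apply le_csInf (Set.range_nonempty _)
      rintro b ⟨w, rfl⟩
      show D ≤ G.dist w (f w)
      rw [key w]
      omega
  rw [hSinf]
  ext v
  constructor
  · rintro ⟨m, rfl⟩
    exact hone m
  · intro hv
    have hkey := key v
    rw [Set.mem_setOf_eq] at hv
    rw [hv] at hkey
    have hk0 : sInf (Set.range fun m : ℤ => G.dist v (c m)) = 0 := by omega
    obtain ⟨m0, hm0⟩ : ∃ m0 : ℤ, G.dist v (c m0) = 0 := by
      have := Nat.sInf_mem (Set.range_nonempty (fun m : ℤ => G.dist v (c m)))
      rw [hk0] at this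
      exact this
    exact ⟨m0, ((hT.isConnected.dist_eq_zero_iff).mp hm0).symm⟩

lemma exists_axis (hT : G.IsTree) (f : G ≃g G)
    (hfix : ∀ v : V, f v ≠ v) (hinv : ∀ u v : V, G.Adj u v → ¬(f u = v ∧ f v = u)) :
    ∃ c : ℤ → V, IsGraphLine G c ∧ ∃ d : ℤ, d ≠ 0 ∧ ∀ t : ℤ, f (c t) = c (t + d) := by
  classical
  have hne : Nonempty V := hT.isConnected.nonempty
  set n : ℕ := sInf (Set.range fun v : V => G.dist v (f v)) with hn
  obtain ⟨v0, hv0⟩ : ∃ v0 : V, G.dist v0 (f v0) = n :=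
    Nat.sInf_mem (Set.range_nonempty _)
  have hnle : ∀ v : V, n ≤ G.dist v (f v) := fun v => Nat.sInf_le ⟨v, rfl⟩
  have hn1 : 1 ≤ n := by
    rcases Nat.eq_zero_or_pos n with h | h
    · exfalso
      rw [h] at hv0
      exact hfix v0 ((hT.isConnected.dist_eq_zero_iff).mp hv0).symm
    · exact h
  obtain ⟨p, hp, hlp⟩ := exists_geodesic hT v0 (f v0)
  rw [hv0] at hlp
  have hpn : p.getVert n = f v0 := by rw [← hlp, Walk.getVert_length]
  have key : f (p.getVert 1) ≠ p.getVert (n - 1) := by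
    intro heq
    rcases eq_or_lt_of_le hn1 with h1 | h2
    · -- n = 1
      have hg1 : p.getVert 1 = f v0 := by rw [← h1] at hpn; exact hpn
      have hadj01 : G.Adj v0 (f v0) := by
        have := Walk.adj_getVert_succ p (by omega : 0 < p.length)
        rwa [Walk.getVert_zero, hg1] at this
      rw [hg1, ← h1, Nat.sub_self, Walk.getVert_zero] at heq
      exact hinv v0 (f v0) hadj01 ⟨rfl, heq⟩
    · -- 2 ≤ n
      have hd : G.dist (p.getVert 1) (p.getVert (n - 1)) = n - 2 := by
        have hm := master hT (fun j => p.getVert (1 + j)) (n - 2)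
          (fun j hj => by
            have := Walk.adj_getVert_succ p (i := 1 + j) (by omega)
            simpa [show 1 + j + 1 = 1 + (j + 1) by ring] using this)
          (fun j hj1 hj2 => by
            intro h
            have := getVert_injOn hp (1 + (j+1)) (1 + (j-1)) (by omega) (by omega) h
            omega) (n - 2) le_rfl
        simpa [show 1 + (n - 2) = n - 1 by omega] using hm
      rw [← heq] at hd
      have := hnle (p.getVert 1)
      omega
  -- powers of f
  set φ : ℤ → Equiv.Perm V := fun k => (f.toEquiv : Equiv.Perm V) ^ k with hφ
  have hφadd : ∀ (j k : ℤ) (x : V), φ (j + k) x = φ j (φ k x) := by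
    intro j k x
    rw [hφ]
    simp only [zpow_add, Equiv.Perm.mul_apply]
  have hφ1 : ∀ x : V, φ 1 x = f x := by
    intro x
    rw [hφ]
    simp only [zpow_one]
    rfl
  have hφsucc : ∀ (k : ℤ) (x : V), φ (k + 1) x = φ k (f x) := by
    intro k x
    rw [hφadd k 1, hφ1]
  have hstep : ∀ (k : ℤ) (x : V), φ k x = φ (k - 1) (f x) := by
    intro k x
    have h := hφsucc (k - 1) x
    rwa [show k - 1 + 1 = k by ring] at h
  have hφadj : ∀ (k : ℤ) (a b : V), G.Adj a b → G.Adj (φ k a) (φ k b) := by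
    have hup : ∀ (a b : V), G.Adj a b → G.Adj (f a) (f b) := fun a b h =>
      f.map_adj_iff.mpr h
    have hdown : ∀ (a b : V), G.Adj a b → G.Adj (f.symm a) (f.symm b) := by
      intro a b h
      rw [← f.map_adj_iff, RelIso.apply_symm_apply, RelIso.apply_symm_apply]
      exact h
    intro k
    induction k using Int.induction_on with
    | zero => intro a b h; simpa [hφ] using h
    | succ i ih =>
      intro a b h
      have e1 : ∀ x : V, φ (i + 1) x = f (φ i x) := by
        intro x
        rw [add_comm, hφadd 1 i x, hφ1]
      rw [e1, e1]
      exact hup _ _ (ih a b h)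
    | pred i ih =>
      intro a b h
      have hφm1 : ∀ y : V, φ (-1) y = f.symm y := by
        intro y
        rw [hφ]
        simp only [zpow_neg, zpow_one]
        rfl
      have e1 : ∀ x : V, φ (-i - 1) x = f.symm (φ (-i) x) := by
        intro x
        have h2 : (-(i:ℤ) - 1) = (-1) + (-i) := by ring
        rw [h2, hφadd (-1) (-i) x, hφm1]
      rw [e1, e1]
      exact hdown _ _ (ih a b h)
  have hφinj : ∀ k : ℤ, Function.Injective (φ k) := fun k => (φ k).injective
  -- the line
  set n' : ℤ := (n : ℤ) with hn'
  have hn'pos : 0 < n' := by omega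
  set c : ℤ → V := fun t => φ (t / n') (p.getVert (t % n').toNat) with hc
  have hrep : ∀ (t k r : ℤ), t = n' * k + r → 0 ≤ r → r < n' →
      c t = φ k (p.getVert r.toNat) := by
    intro t k r ht h0 h1
    have hq : t / n' = k := by
      rw [ht, add_comm, Int.add_mul_ediv_left r k (by omega : n' ≠ 0),
        Int.ediv_eq_zero_of_lt h0 h1, zero_add]
    have hr : t % n' = r := by
      rw [ht, add_comm, Int.add_mul_emod_self_left, Int.emod_eq_of_lt h0 h1]
    rw [hc]
    simp only [hq, hr]
  have hdecomp : ∀ t : ℤ, ∃ k r : ℤ, t = n' * k + r ∧ 0 ≤ r ∧ r < n' := by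
    intro t
    exact ⟨t / n', t % n', (Int.mul_ediv_add_emod t n').symm,
      Int.emod_nonneg t (by omega), Int.emod_lt_of_pos t hn'pos⟩
  have htrans : ∀ t : ℤ, f (c t) = c (t + n') := by
    intro t
    obtain ⟨k, r, ht, h0, h1⟩ := hdecomp t
    rw [hrep t k r ht h0 h1, hrep (t + n') (k + 1) r (by rw [ht]; ring) h0 h1]
    rw [add_comm k 1, hφadd 1 k, hφ1]
  have hadjc : ∀ t : ℤ, G.Adj (c t) (c (t + 1)) := by
    intro t
    obtain ⟨k, r, ht, h0, h1⟩ := hdecomp t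
    rcases lt_or_ge (r + 1) n' with h2 | h2
    · rw [hrep t k r ht h0 h1, hrep (t + 1) k (r + 1) (by rw [ht]; ring) (by omega) h2]
      have := Walk.adj_getVert_succ p (i := r.toNat) (by omega)
      rw [show (r + 1).toNat = r.toNat + 1 by omega]
      exact hφadj k _ _ this
    · have h3 : r = n' - 1 := by omega
      rw [hrep t k r ht h0 h1, hrep (t + 1) (k + 1) 0 (by rw [ht, h3]; ring) le_rfl hn'pos]
      rw [hφadd k 1, hφ1, Int.toNat_zero, Walk.getVert_zero]
      have h5 := Walk.adj_getVert_succ p (i := n - 1) (by omega)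
      rw [show n - 1 + 1 = n by omega, hpn] at h5
      rw [show r.toNat = n - 1 by omega]
      exact hφadj k _ _ h5
  have hnbc : ∀ t : ℤ, c (t + 1) ≠ c (t - 1) := by
    intro t
    obtain ⟨k, r, ht, h0, h1⟩ := hdecomp t
    rcases eq_or_lt_of_le h0 with h2 | h2
    · -- r = 0
      have e2 : c (t - 1) = φ (k - 1) (p.getVert (n - 1)) := by
        rw [hrep (t - 1) (k - 1) (n' - 1) (by rw [ht, ← h2]; ring) (by omega) (by omega)]
        congr 2
        omega
      rcases eq_or_lt_of_le hn1 with hn2 | hn2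
      · -- n = 1
        have hn'1 : n' = 1 := by omega
        have e1 : c (t + 1) = φ (k - 1) (f (f v0)) := by
          rw [hrep (t + 1) (k + 1) 0 (by rw [ht, ← h2, hn'1]; ring) le_rfl hn'pos]
          rw [Int.toNat_zero, Walk.getVert_zero, hstep (k + 1),
            show k + 1 - 1 = k by ring, hstep k]
        rw [e1, e2]
        intro h
        have h5 := hφinj _ h
        apply key
        rw [show p.getVert 1 = f v0 by rw [← hn2] at hpn; exact hpn, h5]
      · -- n ≥ 2
        have e1 : c (t + 1) = φ (k - 1) (f (p.getVert 1)) := by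
          rw [hrep (t + 1) k 1 (by rw [ht, ← h2]; ring) zero_le_one (by omega)]
          rw [hstep k]
          norm_num
        rw [e1, e2]
        intro h
        exact key (hφinj _ h)
    · rcases lt_or_ge (r + 1) n' with h3 | h3
      · -- 1 ≤ r, r + 1 < n'
        rw [hrep (t + 1) k (r + 1) (by rw [ht]; ring) (by omega) h3,
          hrep (t - 1) k (r - 1) (by rw [ht]; ring) (by omega) (by omega)]
        intro h
        have := getVert_injOn hp _ _ (by omega) (by omega) (hφinj _ h)
        omega
      · -- r = n' - 1 ≥ 1
        have h4 : r = n' - 1 := by omega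
        rw [hrep (t + 1) (k + 1) 0 (by rw [ht, h4]; ring) le_rfl hn'pos,
          hrep (t - 1) k (r - 1) (by rw [ht]; ring) (by omega) (by omega)]
        rw [hφadd k 1, hφ1, Int.toNat_zero, Walk.getVert_zero]
        intro h
        have h5 := hφinj _ h
        have h6 : p.getVert n = p.getVert ((r - 1).toNat) := hpn.trans h5
        have := getVert_injOn hp _ _ (by omega) (by omega) h6
        omega
  refine ⟨c, ⟨seq_inj hT c hadjc hnbc, hadjc⟩, n', by omega, htrans⟩

end TreeAux

/-- Every automorphism of a tree fixes a vertex, or inverts an edge (fixing its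
midpoint), or has an invariant line along which it translates nontrivially;
moreover, if it fixes no vertex and inverts no edge, the invariant line is unique. -/
theorem tree_automorphism_trichotomy {V : Type*} (G : SimpleGraph V) (hT : G.IsTree)
    (f : G ≃g G) :
    ((∃ v : V, f v = v) ∨ (∃ u v : V, G.Adj u v ∧ f u = v ∧ f v = u) ∨
      ∃ c : ℤ → V, IsInvariantLine G f c) ∧
    ((∀ v : V, f v ≠ v) → (∀ u v : V, G.Adj u v → ¬(f u = v ∧ f v = u)) →
      ∀ c c' : ℤ → V, IsInvariantLine G f c → IsInvariantLine G f c' →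
        Set.range c = Set.range c') := by
  constructor
  · by_cases h1 : ∃ v : V, f v = v
    · exact Or.inl h1
    · by_cases h2 : ∃ u v : V, G.Adj u v ∧ f u = v ∧ f v = u
      · exact Or.inr (Or.inl h2)
      · refine Or.inr (Or.inr ?_)
        push_neg at h1
        obtain ⟨c, hline, d, hd, htr⟩ := exists_axis hT f h1
          (fun u v huv hc => h2 ⟨u, v, huv, hc⟩)
        exact ⟨c, hline, d, hd, htr⟩
  · intro hfix hinv c c' hc hc'
    obtain ⟨⟨hinj, hadj⟩, d, hd, htr⟩ := hc
    obtain ⟨⟨hinj', hadj'⟩, d', hd', htr'⟩ := hc'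
    rw [axis_char hT f c ⟨hinj, hadj⟩ d hd htr,
      axis_char hT f c' ⟨hinj', hadj'⟩ d' hd' htr']
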